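/- Let n ∈ ℕ and define the n × n matrix Λ_n by (Λ_n)_{i,j} = C(2n - i - j, n - i) for 1 ≤ i, j ≤ n. Then Λ_n is invertible, and its inverse satisfies (Λ_n^{-1})_{i,j} = Σ_{k=1}^{min{i,j}} (-1)^{i+j} C(n - k, n - i) C(n - k, n - j). -/

import Mathlib

open Finset

/-- Vandermonde-type identity. -/
lemma aux_vand (a b n : ℕ) (hb : b < n) :
    ∑ k ∈ Finset.range n, a.choose k * b.choose k = (a + b).choose b := by
  rw [Nat.add_choose_eq, Finset.Nat.sum_antidiagonal_eq_sum_range_succ_mk]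
  have h1 : ∑ k ∈ Finset.range n, a.choose k * b.choose k
      = ∑ k ∈ Finset.range (b + 1), a.choose k * b.choose k := by
    symm
    apply Finset.sum_subset (Finset.range_subset_range.2 hb)
    intro k _ hk
    simp only [Finset.mem_range, not_lt] at hk
    rw [Nat.choose_eq_zero_of_lt (by omega : b < k), mul_zero]
  rw [h1]
  apply Finset.sum_congr rfl
  intro k hk
  simp only [Finset.mem_range] at hk
  rw [Nat.choose_symm (by omega : k ≤ b)]

/-- Orthogonality of binomial coefficients (alternating sum). -/
lemma aux_ortho (n a b : ℕ) (ha : a < n) :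
    ∑ m ∈ Finset.range n, (-1 : ℝ) ^ m * (a.choose m : ℝ) * (m.choose b : ℝ)
      = if a = b then (-1 : ℝ) ^ b else 0 := by
  rcases lt_or_ge a b with h | h
  · rw [if_neg (by omega)]
    apply Finset.sum_eq_zero
    intro m _
    rcases lt_or_ge m b with h2 | h2
    · rw [Nat.choose_eq_zero_of_lt h2]; simp
    · rw [Nat.choose_eq_zero_of_lt (by omega : a < m)]; simp
  · have hstep : ∑ m ∈ Finset.range n, (-1 : ℝ) ^ m * (a.choose m : ℝ) * (m.choose b : ℝ)
        = ∑ m ∈ Finset.Icc b a, (-1 : ℝ) ^ m * (a.choose m : ℝ) * (m.choose b : ℝ) := by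
      symm
      apply Finset.sum_subset
      · intro m hm; simp only [Finset.mem_Icc] at hm; simp only [Finset.mem_range]; omega
      · intro m hm hm'
        simp only [Finset.mem_range] at hm
        simp only [Finset.mem_Icc, not_and, not_le] at hm'
        rcases lt_or_ge m b with h2 | h2
        · rw [Nat.choose_eq_zero_of_lt h2]; simp
        · rw [Nat.choose_eq_zero_of_lt (by omega : a < m)]; simp
    rw [hstep, ← Finset.Ico_add_one_right_eq_Icc, Finset.sum_Ico_eq_sum_range]
    have hterm : ∀ j ∈ Finset.range (a + 1 - b),
        (-1 : ℝ) ^ (b + j) * (a.choose (b + j) : ℝ) * ((b + j).choose b : ℝ)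
          = ((-1 : ℝ) ^ b * (a.choose b : ℝ)) * ((-1 : ℝ) ^ j * ((a - b).choose j : ℝ)) := by
      intro j hj
      simp only [Finset.mem_range] at hj
      have hc := Nat.choose_mul (n := a) (show b ≤ b + j by omega)
      rw [Nat.add_sub_cancel_left] at hc
      have hc' : (a.choose (b + j) : ℝ) * ((b + j).choose b : ℝ)
          = (a.choose b : ℝ) * ((a - b).choose j : ℝ) := by
        have := congrArg (Nat.cast : ℕ → ℝ) hc
        push_cast at this
        exact this
      calc (-1 : ℝ) ^ (b + j) * (a.choose (b + j) : ℝ) * ((b + j).choose b : ℝ)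
          = (-1 : ℝ) ^ (b + j) * ((a.choose (b + j) : ℝ) * ((b + j).choose b : ℝ)) := by ring
        _ = (-1 : ℝ) ^ (b + j) * ((a.choose b : ℝ) * ((a - b).choose j : ℝ)) := by rw [hc']
        _ = ((-1 : ℝ) ^ b * (a.choose b : ℝ)) * ((-1 : ℝ) ^ j * ((a - b).choose j : ℝ)) := by
            rw [pow_add]; ring
    rw [Finset.sum_congr rfl hterm, ← Finset.mul_sum]
    have key : ∑ j ∈ Finset.range (a + 1 - b), (-1 : ℝ) ^ j * ((a - b).choose j : ℝ)
        = if a - b = 0 then 1 else 0 := by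
      have h0 := Int.alternating_sum_range_choose (n := a - b)
      have h1 := congrArg (Int.cast : ℤ → ℝ) h0
      push_cast [apply_ite (Int.cast : ℤ → ℝ)] at h1
      rw [show a + 1 - b = (a - b) + 1 by omega]
      exact_mod_cast h1
    rw [key]
    by_cases hab : a = b
    · subst hab; simp
    · rw [if_neg (by omega : ¬(a - b = 0)), if_neg hab]; ring

/-- Reflected orthogonality. -/
lemma aux_ortho_reflect (n a b : ℕ) (ha : a < n) :
    ∑ m ∈ Finset.range n, (-1 : ℝ) ^ m * (a.choose (n - 1 - m) : ℝ) * ((n - 1 - m).choose b : ℝ)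
      = (-1 : ℝ) ^ (n - 1) * (if a = b then (-1 : ℝ) ^ b else 0) := by
  rw [← Finset.sum_range_reflect]
  have hterm : ∀ m ∈ Finset.range n,
      (-1 : ℝ) ^ (n - 1 - m) * (a.choose (n - 1 - (n - 1 - m)) : ℝ)
          * ((n - 1 - (n - 1 - m)).choose b : ℝ)
        = (-1 : ℝ) ^ (n - 1) * ((-1 : ℝ) ^ m * (a.choose m : ℝ) * (m.choose b : ℝ)) := by
    intro m hm
    simp only [Finset.mem_range] at hm
    rw [show n - 1 - (n - 1 - m) = m by omega]
    have hsgn : (-1 : ℝ) ^ (n - 1 - m) = (-1 : ℝ) ^ (n - 1) * (-1 : ℝ) ^ m := by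
      have h2 : (-1 : ℝ) ^ (n - 1 - m) * (-1 : ℝ) ^ (2 * m)
          = (-1 : ℝ) ^ (n - 1) * (-1 : ℝ) ^ m := by
        rw [← pow_add, show n - 1 - m + 2 * m = (n - 1) + m by omega, pow_add]
      simpa [pow_mul, neg_one_sq] using h2
    rw [hsgn]; ring
  rw [Finset.sum_congr rfl hterm, ← Finset.mul_sum, aux_ortho n a b ha]

theorem lambda_matrix_inverse (n : ℕ) (Λ : Matrix (Fin n) (Fin n) ℝ)
    (hΛ : ∀ i j : Fin n,
      Λ i j = (Nat.choose (2 * n - ((i : ℕ) + 1) - ((j : ℕ) + 1)) (n - ((i : ℕ) + 1)) : ℝ)) :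
    IsUnit Λ ∧ ∀ i j : Fin n,
      Λ⁻¹ i j = ∑ k ∈ Finset.Icc 1 (min ((i : ℕ) + 1) ((j : ℕ) + 1)),
        (-1 : ℝ) ^ (((i : ℕ) + 1) + ((j : ℕ) + 1))
          * (Nat.choose (n - k) (n - ((i : ℕ) + 1)) : ℝ)
          * (Nat.choose (n - k) (n - ((j : ℕ) + 1)) : ℝ) := by
  rcases Nat.eq_zero_or_pos n with hn | hn
  · subst hn
    constructor
    · have hone : Λ = 1 := Subsingleton.elim _ _
      rw [hone]; exact isUnit_one
    · intro i; exact i.elim0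
  -- n > 0
  set U : Matrix (Fin n) (Fin n) ℝ :=
    fun i k => ((n - 1 - (i : ℕ)).choose (k : ℕ) : ℝ) with hU
  set W : Matrix (Fin n) (Fin n) ℝ :=
    fun k j => (-1 : ℝ) ^ (j : ℕ) * ((n - 1 - (k : ℕ)).choose (n - 1 - (j : ℕ)) : ℝ) with hW
  set M : Matrix (Fin n) (Fin n) ℝ :=
    fun i j => ∑ k ∈ Finset.Icc 1 (min ((i : ℕ) + 1) ((j : ℕ) + 1)),
        (-1 : ℝ) ^ (((i : ℕ) + 1) + ((j : ℕ) + 1))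
          * (Nat.choose (n - k) (n - ((i : ℕ) + 1)) : ℝ)
          * (Nat.choose (n - k) (n - ((j : ℕ) + 1)) : ℝ) with hM
  set D : Matrix (Fin n) (Fin n) ℝ :=
    fun k i => if (i : ℕ) = n - 1 - (k : ℕ) then (-1 : ℝ) ^ (k : ℕ) else 0 with hD
  set U' : Matrix (Fin n) (Fin n) ℝ :=
    fun l k => (-1 : ℝ) ^ (k : ℕ) * ((n - 1 - (l : ℕ)).choose (n - 1 - (k : ℕ)) : ℝ) with hU'
  -- Step A: Λ = U * Uᵀ
  have hA : Λ = U * U.transpose := by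
    ext i j
    rw [hΛ i j, Matrix.mul_apply]
    simp only [Matrix.transpose_apply]
    simp only [hU]
    rw [Fin.sum_univ_eq_sum_range
      (fun k => ((n - 1 - (i : ℕ)).choose k : ℝ) * ((n - 1 - (j : ℕ)).choose k : ℝ))]
    have hv := aux_vand (n - 1 - (j : ℕ)) (n - 1 - (i : ℕ)) n (by omega)
    have hv' := congrArg (Nat.cast : ℕ → ℝ) hv
    push_cast at hv'
    rw [show 2 * n - ((i : ℕ) + 1) - ((j : ℕ) + 1)
        = (n - 1 - (j : ℕ)) + (n - 1 - (i : ℕ)) from by omega,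
      show n - ((i : ℕ) + 1) = n - 1 - (i : ℕ) from by omega, ← hv']
    apply Finset.sum_congr rfl
    intro k _; ring
  -- Step B: M = Wᵀ * W
  have hB : M = W.transpose * W := by
    ext i j
    rw [Matrix.mul_apply]
    simp only [Matrix.transpose_apply, hW, hM]
    have hext : ∑ k ∈ Finset.Icc 1 (min ((i : ℕ) + 1) ((j : ℕ) + 1)),
        (-1 : ℝ) ^ (((i : ℕ) + 1) + ((j : ℕ) + 1))
          * (Nat.choose (n - k) (n - ((i : ℕ) + 1)) : ℝ)
          * (Nat.choose (n - k) (n - ((j : ℕ) + 1)) : ℝ)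
        = ∑ k ∈ Finset.Icc 1 n,
        (-1 : ℝ) ^ (((i : ℕ) + 1) + ((j : ℕ) + 1))
          * (Nat.choose (n - k) (n - ((i : ℕ) + 1)) : ℝ)
          * (Nat.choose (n - k) (n - ((j : ℕ) + 1)) : ℝ) := by
      apply Finset.sum_subset
      · apply Finset.Icc_subset_Icc_right; omega
      · intro k hk hk'
        simp only [Finset.mem_Icc] at hk hk'
        rcases le_total ((i : ℕ) + 1) ((j : ℕ) + 1) with h | h
        · rw [Nat.choose_eq_zero_of_lt (show n - k < n - ((i : ℕ) + 1) by omega)]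
          simp
        · rw [Nat.choose_eq_zero_of_lt (show n - k < n - ((j : ℕ) + 1) by omega)]
          simp
    rw [hext, ← Finset.Ico_add_one_right_eq_Icc, Finset.sum_Ico_eq_sum_range,
      show n + 1 - 1 = n from rfl]
    rw [Fin.sum_univ_eq_sum_range (fun k =>
      (-1 : ℝ) ^ (i : ℕ) * ((n - 1 - k).choose (n - 1 - (i : ℕ)) : ℝ)
        * ((-1 : ℝ) ^ (j : ℕ) * ((n - 1 - k).choose (n - 1 - (j : ℕ)) : ℝ)))]
    apply Finset.sum_congr rfl
    intro k _
    rw [show n - (1 + k) = n - 1 - k from by omega,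
      show n - ((i : ℕ) + 1) = n - 1 - (i : ℕ) from by omega,
      show n - ((j : ℕ) + 1) = n - 1 - (j : ℕ) from by omega,
      show ((i : ℕ) + 1) + ((j : ℕ) + 1) = ((i : ℕ) + (j : ℕ)) + 2 from by omega,
      pow_add, pow_add]
    ring
  -- Step C: W * U = D
  have hC : W * U = D := by
    ext k i
    rw [Matrix.mul_apply]
    simp only [hW, hU, hD]
    rw [Fin.sum_univ_eq_sum_range (fun l =>
      (-1 : ℝ) ^ l * ((n - 1 - (k : ℕ)).choose (n - 1 - l) : ℝ)
        * ((n - 1 - l).choose (i : ℕ) : ℝ))]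
    rw [aux_ortho_reflect n (n - 1 - (k : ℕ)) (i : ℕ) (by omega)]
    by_cases h : (i : ℕ) = n - 1 - (k : ℕ)
    · rw [if_pos h.symm, if_pos h, h]
      rw [← pow_add, show n - 1 + (n - 1 - (k : ℕ)) = 2 * (n - 1 - (k : ℕ)) + (k : ℕ)
        from by omega, pow_add, pow_mul, neg_one_sq, one_pow, one_mul]
    · rw [if_neg (fun hh => h hh.symm), if_neg h, mul_zero]
  -- Step D: U * Dᵀ = U'
  have hDd : U * D.transpose = U' := by
    ext l k
    rw [Matrix.mul_apply]
    simp only [Matrix.transpose_apply]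
    simp only [hU, hD, hU']
    rw [Finset.sum_eq_single (⟨n - 1 - (k : ℕ), by omega⟩ : Fin n)]
    · simp [mul_comm]
    · intro b _ hb
      rw [if_neg, mul_zero]
      intro hv
      exact hb (Fin.ext hv)
    · intro h; exact absurd (Finset.mem_univ _) h
  -- Step E: U' * W = 1
  have hE : U' * W = 1 := by
    ext l j
    rw [Matrix.mul_apply]
    simp only [hU', hW]
    rw [Fin.sum_univ_eq_sum_range (fun k =>
      (-1 : ℝ) ^ k * ((n - 1 - (l : ℕ)).choose (n - 1 - k) : ℝ)
        * ((-1 : ℝ) ^ (j : ℕ) * ((n - 1 - k).choose (n - 1 - (j : ℕ)) : ℝ)))]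
    have hcong : ∀ k ∈ Finset.range n,
        (-1 : ℝ) ^ k * ((n - 1 - (l : ℕ)).choose (n - 1 - k) : ℝ)
          * ((-1 : ℝ) ^ (j : ℕ) * ((n - 1 - k).choose (n - 1 - (j : ℕ)) : ℝ))
        = (-1 : ℝ) ^ (j : ℕ) * ((-1 : ℝ) ^ k * ((n - 1 - (l : ℕ)).choose (n - 1 - k) : ℝ)
          * ((n - 1 - k).choose (n - 1 - (j : ℕ)) : ℝ)) := by
      intro k _; ring
    rw [Finset.sum_congr rfl hcong, ← Finset.mul_sum,
      aux_ortho_reflect n (n - 1 - (l : ℕ)) (n - 1 - (j : ℕ)) (by omega)]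
    by_cases h : l = j
    · subst h
      rw [if_pos rfl, Matrix.one_apply_eq, ← pow_add, ← pow_add,
        show (l : ℕ) + (n - 1 + (n - 1 - (l : ℕ))) = 2 * (n - 1) from by omega,
        pow_mul, neg_one_sq, one_pow]
    · have hl : (l : ℕ) < n := l.isLt
      have hj : (j : ℕ) < n := j.isLt
      rw [if_neg (fun hh : n - 1 - (l : ℕ) = n - 1 - (j : ℕ) =>
          h (Fin.ext (by omega : (l : ℕ) = (j : ℕ)))),
        Matrix.one_apply_ne h, mul_zero, mul_zero]
  -- Combine: Λ * M = 1
  have hmain : Λ * M = 1 := by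
    rw [hA, hB]
    calc U * U.transpose * (W.transpose * W)
        = U * (W * U).transpose * W := by
          rw [Matrix.transpose_mul]
          simp only [Matrix.mul_assoc]
      _ = U * D.transpose * W := by rw [hC]
      _ = U' * W := by rw [hDd]
      _ = 1 := hE
  refine ⟨(Matrix.isUnit_iff_isUnit_det _).2 (Matrix.isUnit_det_of_right_inverse hmain), ?_⟩
  intro i j
  rw [Matrix.inv_eq_right_inv hmain, hM]
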